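/- If H is a (t,l)-CS matrix of size r×n with n ≥ 2t and t ≥ 1, then r ≥ 2(t+l). -/

import Mathlib

open Matrix Finset

/-- Hamming weight (number of nonzero coordinates) of a real vector. -/
noncomputable def wt {m : ℕ} (v : Fin m → ℝ) : ℕ := (Finset.univ.filter (fun i => v i ≠ 0)).card

lemma wt_le_of_support_lt {m k : ℕ} (hk : k ≤ m) (v : Fin m → ℝ)
    (h : ∀ j : Fin m, v j ≠ 0 → (j : ℕ) < k) : wt v ≤ k := by
  have hsub : (Finset.univ.filter (fun i => v i ≠ 0)) ⊆
      (Finset.univ.image (Fin.castLE hk)) := by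
    intro j hj
    simp only [mem_filter] at hj
    have := h j hj.2
    exact Finset.mem_image.mpr ⟨⟨(j : ℕ), this⟩, Finset.mem_univ _, by ext; simp⟩
  calc wt v ≤ (Finset.univ.image (Fin.castLE hk)).card := Finset.card_le_card hsub
    _ ≤ (Finset.univ : Finset (Fin k)).card := Finset.card_image_le
    _ = k := by simp

theorem singleton_bound_CS {r n t l : ℕ} (H : Matrix (Fin r) (Fin n) ℝ)
    (ht : 1 ≤ t) (hn : 2 * t ≤ n)
    (hCS : ∀ z : Fin n → ℝ, z ≠ 0 → wt z ≤ 2 * t → 2 * l + 1 ≤ wt (H.mulVec z)) :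
    2 * (t + l) ≤ r := by
  have hn0 : 0 < n := by omega
  -- First, r ≥ 2l + 1
  have hr : 2 * l + 1 ≤ r := by
    set z0 : Fin n → ℝ := Pi.single ⟨0, hn0⟩ 1 with hz0
    have hz0ne : z0 ≠ 0 := by
      intro h
      have := congrFun h ⟨0, hn0⟩
      simp [hz0] at this
    have hwt : wt z0 ≤ 2 * t := by
      apply wt_le_of_support_lt hn
      intro j hj
      by_contra hc
      have : j ≠ ⟨0, hn0⟩ := by
        intro he; subst he; exact hc (by simp; omega)
      simp [hz0, Pi.single_apply, this] at hj
    have h1 := hCS z0 hz0ne hwt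
    calc 2 * l + 1 ≤ wt (H.mulVec z0) := h1
      _ ≤ (Finset.univ : Finset (Fin r)).card := Finset.card_le_card (Finset.filter_subset _ _)
      _ = r := by simp
  have hlr : 2 * l ≤ r := by omega
  -- The composite linear map
  let E : (Fin (2 * t) → ℝ) →ₗ[ℝ] (Fin n → ℝ) :=
    Function.ExtendByZero.linearMap ℝ (Fin.castLE hn)
  let g : Fin (r - 2 * l) → Fin r := fun i => ⟨2 * l + (i : ℕ), by omega⟩
  let P : (Fin r → ℝ) →ₗ[ℝ] (Fin (r - 2 * l) → ℝ) := LinearMap.funLeft ℝ ℝ g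
  let F := P ∘ₗ H.mulVecLin ∘ₗ E
  have hcast : Function.Injective (Fin.castLE hn) := Fin.castLE_injective hn
  have hinj : Function.Injective F := by
    rw [← LinearMap.ker_eq_bot]
    apply LinearMap.ker_eq_bot'.mpr
    intro x hx
    by_contra hxne
    set z : Fin n → ℝ := E x with hz
    have hzval : ∀ i : Fin (2 * t), z (Fin.castLE hn i) = x i := by
      intro i
      simp [hz, E, Function.ExtendByZero.linearMap_apply, hcast.extend_apply]
    have hzzero : ∀ j : Fin n, ¬ (j : ℕ) < 2 * t → z j = 0 := by
      intro j hj
      simp only [hz, E, Function.ExtendByZero.linearMap_apply]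
      rw [Function.extend_apply']
      · rfl
      · rintro ⟨i, rfl⟩
        exact hj i.isLt
    have hzne : z ≠ 0 := by
      intro h
      apply hxne
      ext i
      have := congrFun h (Fin.castLE hn i)
      rw [hzval i] at this
      simp at this; exact this
    have hwtz : wt z ≤ 2 * t := by
      apply wt_le_of_support_lt hn
      intro j hj
      by_contra hc
      exact hj (hzzero j hc)
    have hlb := hCS z hzne hwtz
    -- F x = 0 means H.mulVec z vanishes on coordinates ≥ 2l
    have hHz : ∀ j : Fin r, ¬ (j : ℕ) < 2 * l → (H.mulVec z) j = 0 := by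
      intro j hj
      have : (j : ℕ) - 2 * l < r - 2 * l := by omega
      have h2 := congrFun hx ⟨(j : ℕ) - 2 * l, this⟩
      have hgj : g ⟨(j : ℕ) - 2 * l, this⟩ = j := by
        simp only [g]
        ext
        simp
        omega
      simpa [F, P, LinearMap.funLeft, hgj] using h2
    have hub : wt (H.mulVec z) ≤ 2 * l := by
      apply wt_le_of_support_lt hlr
      intro j hj
      by_contra hc
      exact hj (hHz j hc)
    omega
  have hfin := LinearMap.finrank_le_finrank_of_injective hinj
  simp only [Module.finrank_fintype_fun_eq_card, Fintype.card_fin] at hfin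
  omega
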